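/- Let μ, ν ∈ P₂(ℝ) and let G be a class of non-decreasing functions g: ℝ → ℝ with g#μ ∈ P₂(ℝ). For every g ∈ G, W₂²(g#μ, ν) = ‖g − π̄*‖²_{L²(μ)} + m₂(ν) − m₂(π̄*#μ), where π* = (F_μ⁻, F_ν⁻)#L_{[0,1]} is the (unique) quadratic-cost optimal plan between μ and ν and π̄* its barycentric projection. Consequently, argmin_{g∈G} W₂²(g#μ, ν) = argmin_{g∈G} ‖g − π̄*‖²_{L²(μ)}. -/

import Mathlib

open Set MeasureTheory Filter
open scoped ENNReal Topology

/-- Squared 2-Wasserstein cost between measures on ℝ. -/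
noncomputable def W2sq (ρ₁ ρ₂ : MeasureTheory.Measure ℝ) : ℝ≥0∞ :=
  ⨅ π ∈ {π : MeasureTheory.Measure (ℝ × ℝ) |
      π.map Prod.fst = ρ₁ ∧ π.map Prod.snd = ρ₂},
    ∫⁻ q, ENNReal.ofReal ((q.1 - q.2) ^ 2) ∂π

/-- The quantile function (right-inverse of the cdf) of a measure ρ on ℝ. -/
noncomputable def quantileFn (ρ : MeasureTheory.Measure ℝ) (p : ℝ) : ℝ :=
  sInf {x : ℝ | p ≤ (ρ (Set.Iic x)).toReal}

/-- The optimal transport plan for the quadratic cost between two measures on ℝ: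
π* = (F_μ⁻, F_ν⁻)#Leb_{[0,1]}. -/
noncomputable def OTplan1D (μ ν : MeasureTheory.Measure ℝ) :
    MeasureTheory.Measure (ℝ × ℝ) :=
  MeasureTheory.Measure.map (fun p => (quantileFn μ p, quantileFn ν p))
    (MeasureTheory.volume.restrict (Set.Icc (0:ℝ) 1))

section Quantile
variable (ρ : Measure ℝ) [IsProbabilityMeasure ρ]

lemma cdf_toReal (x : ℝ) : (ρ (Iic x)).toReal = ProbabilityTheory.cdf ρ x :=
  (ProbabilityTheory.cdf_eq_real ρ x).symm

lemma quantile_set_nonempty {p : ℝ} (hp : p < 1) :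
    {x : ℝ | p ≤ (ρ (Set.Iic x)).toReal}.Nonempty := by
  have h := ProbabilityTheory.tendsto_cdf_atTop ρ
  have : ∀ᶠ x in atTop, p < ProbabilityTheory.cdf ρ x :=
    h.eventually_const_lt hp
  obtain ⟨x, hx⟩ := this.exists
  exact ⟨x, by rw [mem_setOf_eq, cdf_toReal]; exact hx.le⟩

lemma quantile_set_bddBelow {p : ℝ} (hp : 0 < p) :
    BddBelow {x : ℝ | p ≤ (ρ (Set.Iic x)).toReal} := by
  have h := ProbabilityTheory.tendsto_cdf_atBot ρ
  have : ∀ᶠ x in atBot, ProbabilityTheory.cdf ρ x < p := h.eventually_lt_const hp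
  obtain ⟨x₀, hx₀⟩ := eventually_atBot.mp this
  refine ⟨x₀, fun x hx => ?_⟩
  by_contra hlt
  push_neg at hlt
  have := hx₀ x hlt.le
  rw [mem_setOf_eq, cdf_toReal] at hx
  linarith

/-- Galois connection for the quantile function. -/
lemma quantile_le_iff {p x : ℝ} (hp0 : 0 < p) (hp1 : p < 1) :
    quantileFn ρ p ≤ x ↔ p ≤ (ρ (Set.Iic x)).toReal := by
  constructor
  · intro h
    rw [cdf_toReal]
    -- p ≤ cdf (x + ε) for all ε > 0
    have key : ∀ ε > 0, p ≤ ProbabilityTheory.cdf ρ (x + ε) := by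
      intro ε hε
      obtain ⟨y, hy, hy'⟩ := Real.lt_sInf_add_pos (quantile_set_nonempty ρ hp1) hε
      rw [mem_setOf_eq, cdf_toReal] at hy
      unfold quantileFn at h
      exact hy.trans (ProbabilityTheory.monotone_cdf ρ (by linarith))
    -- right continuity
    have hrc : ContinuousWithinAt (ProbabilityTheory.cdf ρ) (Ici x) x :=
      (ProbabilityTheory.cdf ρ).right_continuous x
    have : Tendsto (fun ε : ℝ => ProbabilityTheory.cdf ρ (x + ε)) (𝓝[>] 0)
        (𝓝 (ProbabilityTheory.cdf ρ x)) := by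
      have h1 : Tendsto (fun ε : ℝ => x + ε) (𝓝[>] 0) (𝓝[Ici x] x) := by
        apply tendsto_nhdsWithin_of_tendsto_nhds_of_eventually_within
        · have h0 : Tendsto (fun ε : ℝ => x + ε) (𝓝 0) (𝓝 (x + 0)) :=
            (continuous_const.add continuous_id).tendsto 0
          rw [add_zero] at h0
          exact h0.mono_left nhdsWithin_le_nhds
        · filter_upwards [self_mem_nhdsWithin] with ε (hε : 0 < ε)
          simp [le_of_lt hε]
      exact hrc.tendsto.comp h1
    exact ge_of_tendsto this (by
      filter_upwards [self_mem_nhdsWithin] with ε (hε : 0 < ε) using key ε hε)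
  · intro h
    exact csInf_le (quantile_set_bddBelow ρ hp0) h

lemma quantile_monotoneOn : MonotoneOn (quantileFn ρ) (Ioo (0:ℝ) 1) := by
  intro p hp q hq hpq
  exact csInf_le_csInf (quantile_set_bddBelow ρ hp.1)
    (quantile_set_nonempty ρ hq.2)
    (fun x hx => le_trans hpq hx)

lemma quantile_aemeasurable :
    AEMeasurable (quantileFn ρ) (volume.restrict (Ioo (0:ℝ) 1)) :=
  aemeasurable_restrict_of_monotoneOn measurableSet_Ioo (quantile_monotoneOn ρ)

/-- Inverse transform sampling. -/
lemma map_quantile :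
    Measure.map (quantileFn ρ) (volume.restrict (Ioo (0:ℝ) 1)) = ρ := by
  have hmeas := quantile_aemeasurable ρ
  have hprob : IsProbabilityMeasure (volume.restrict (Ioo (0:ℝ) 1)) := by
    constructor
    simp [Real.volume_Ioo]
  have hprob2 : IsProbabilityMeasure
      (Measure.map (quantileFn ρ) (volume.restrict (Ioo (0:ℝ) 1))) :=
    Measure.isProbabilityMeasure_map hmeas
  refine Measure.ext_of_Iic _ _ (fun x => ?_)
  rw [Measure.map_apply_of_aemeasurable hmeas measurableSet_Iic]
  have hset : (quantileFn ρ ⁻¹' Iic x) ∩ Ioo (0:ℝ) 1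
      = {p | p ≤ (ρ (Iic x)).toReal} ∩ Ioo (0:ℝ) 1 := by
    ext p
    simp only [mem_inter_iff, mem_preimage, mem_Iic, mem_setOf_eq, and_congr_left_iff]
    intro hp
    exact quantile_le_iff ρ hp.1 hp.2
  rw [Measure.restrict_apply' measurableSet_Ioo, hset,
    ← Measure.restrict_apply' measurableSet_Ioo]
  have : {p : ℝ | p ≤ (ρ (Iic x)).toReal} = Iic ((ρ (Iic x)).toReal) := rfl
  rw [this, Measure.restrict_apply' measurableSet_Ioo]
  have h0 : 0 ≤ (ρ (Iic x)).toReal := ENNReal.toReal_nonneg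
  have h1 : (ρ (Iic x)).toReal ≤ 1 := by
    have := prob_le_one (μ := ρ) (s := Iic x)
    exact ENNReal.toReal_le_of_le_ofReal one_pos.le (by simpa using this)
  have hfin : ρ (Iic x) ≠ ⊤ := measure_ne_top ρ _
  rcases eq_or_lt_of_le h1 with h1' | h1'
  · have hset2 : Iic ((ρ (Iic x)).toReal) ∩ Ioo (0:ℝ) 1 = Ioo (0:ℝ) 1 := by
      rw [h1']
      exact inter_eq_right.mpr (fun p hp => le_of_lt hp.2)
    rw [hset2, Real.volume_Ioo, ← ENNReal.ofReal_toReal hfin, ← h1']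
    norm_num
  · have hset2 : Iic ((ρ (Iic x)).toReal) ∩ Ioo (0:ℝ) 1 = Ioc (0:ℝ) ((ρ (Iic x)).toReal) := by
      ext p
      simp only [mem_inter_iff, mem_Iic, mem_Ioo, mem_Ioc]
      constructor
      · rintro ⟨h, h', _⟩; exact ⟨h', h⟩
      · rintro ⟨h, h'⟩; exact ⟨h', h, lt_of_le_of_lt h' h1'⟩
    rw [hset2, Real.volume_Ioc, ← ENNReal.ofReal_toReal hfin]
    norm_num

end Quantile

section UpSets

/-- Two up-sets (within a set `S`) in a linear order are nested. -/
lemma upset_subset_or_subset {S A B : Set ℝ}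
    (hAS : A ⊆ S) (hBS : B ⊆ S)
    (hA : ∀ p ∈ A, ∀ q ∈ S, p ≤ q → q ∈ A)
    (hB : ∀ p ∈ B, ∀ q ∈ S, p ≤ q → q ∈ B) :
    A ⊆ B ∨ B ⊆ A := by
  by_cases h : A ⊆ B
  · exact Or.inl h
  · right
    rw [not_subset] at h
    obtain ⟨x, hxA, hxB⟩ := h
    intro y hyB
    rcases le_total y x with hyx | hxy
    · exact absurd (hB y hyB x (hAS hxA) hyx) hxB
    · exact hA x hxA y (hBS hyB) hxy

end UpSets

section Plans

variable {h₁ h₂ : ℝ → ℝ}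

local notation "Leb" => volume.restrict (Ioo (0:ℝ) 1)

/-- The monotone coupling maximizes the measure of upper-right quadrants. -/
lemma quadrant_le_monotone_coupling
    (hm₁ : MonotoneOn h₁ (Ioo (0:ℝ) 1)) (hm₂ : MonotoneOn h₂ (Ioo (0:ℝ) 1))
    (π : Measure (ℝ × ℝ))
    (hπ1 : π.map Prod.fst = Measure.map h₁ Leb)
    (hπ2 : π.map Prod.snd = Measure.map h₂ Leb)
    (s t : ℝ) :
    π (Ioi s ×ˢ Ioi t) ≤
      (Measure.map (fun p => (h₁ p, h₂ p)) Leb) (Ioi s ×ˢ Ioi t) := by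
  have hae₁ : AEMeasurable h₁ Leb :=
    aemeasurable_restrict_of_monotoneOn measurableSet_Ioo hm₁
  have hae₂ : AEMeasurable h₂ Leb :=
    aemeasurable_restrict_of_monotoneOn measurableSet_Ioo hm₂
  have haep : AEMeasurable (fun p => (h₁ p, h₂ p)) Leb := hae₁.prodMk hae₂
  set A : Set ℝ := h₁ ⁻¹' (Ioi s) ∩ Ioo (0:ℝ) 1 with hA
  set B : Set ℝ := h₂ ⁻¹' (Ioi t) ∩ Ioo (0:ℝ) 1 with hB
  have hup : A ⊆ B ∨ B ⊆ A := by
    apply upset_subset_or_subset (S := Ioo (0:ℝ) 1) (fun p hp => hp.2) (fun p hp => hp.2)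
    · rintro p ⟨hp1, hp2⟩ q hq hpq
      exact ⟨lt_of_lt_of_le hp1 (hm₁ hp2 hq hpq), hq⟩
    · rintro p ⟨hp1, hp2⟩ q hq hpq
      exact ⟨lt_of_lt_of_le hp1 (hm₂ hp2 hq hpq), hq⟩
  have hγ : (Measure.map (fun p => (h₁ p, h₂ p)) Leb) (Ioi s ×ˢ Ioi t)
      = volume (A ∩ B) := by
    rw [Measure.map_apply_of_aemeasurable haep (measurableSet_Ioi.prod measurableSet_Ioi),
      Measure.restrict_apply' measurableSet_Ioo]
    congr 1
    ext p
    simp only [hA, hB, mem_inter_iff, mem_preimage, mem_prod, mem_Ioi]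
    tauto
  have hρA : (Measure.map h₁ Leb) (Ioi s) = volume A := by
    rw [Measure.map_apply_of_aemeasurable hae₁ measurableSet_Ioi,
      Measure.restrict_apply' measurableSet_Ioo]
  have hνB : (Measure.map h₂ Leb) (Ioi t) = volume B := by
    rw [Measure.map_apply_of_aemeasurable hae₂ measurableSet_Ioi,
      Measure.restrict_apply' measurableSet_Ioo]
  rcases hup with hsub | hsub
  · rw [hγ, inter_eq_left.mpr hsub]
    calc π (Ioi s ×ˢ Ioi t) ≤ π (Prod.fst ⁻¹' (Ioi s)) :=
          measure_mono (fun q hq => hq.1)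
    _ = (π.map Prod.fst) (Ioi s) := (Measure.map_apply measurable_fst measurableSet_Ioi).symm
    _ = volume A := by rw [hπ1, hρA]
  · rw [hγ, inter_eq_right.mpr hsub]
    calc π (Ioi s ×ˢ Ioi t) ≤ π (Prod.snd ⁻¹' (Ioi t)) :=
          measure_mono (fun q hq => hq.2)
    _ = (π.map Prod.snd) (Ioi t) := (Measure.map_apply measurable_snd measurableSet_Ioi).symm
    _ = volume B := by rw [hπ2, hνB]

end Plans

section Hoeffding

/-- The layer-cake kernel: `k x s = 1_{0 ≤ s < x} - 1_{x ≤ s < 0}`. -/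
noncomputable def hk (x s : ℝ) : ℝ :=
  (if s < x then (1:ℝ) else 0) - (if s < 0 then (1:ℝ) else 0)

lemma hk_measurable : Measurable (fun q : ℝ × ℝ => hk q.1 q.2) := by
  unfold hk
  apply Measurable.sub
  · exact Measurable.ite (measurableSet_lt measurable_snd measurable_fst)
      measurable_const measurable_const
  · exact Measurable.ite (measurableSet_lt measurable_snd measurable_const)
      measurable_const measurable_const

lemma hk_eq_indicator_nonneg {x : ℝ} (hx : 0 ≤ x) :
    hk x = (Ico (0:ℝ) x).indicator (fun _ => (1:ℝ)) := by
  funext s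
  unfold hk
  rcases lt_or_ge s 0 with h2 | h2
  · have h1 : s < x := lt_of_lt_of_le h2 hx
    simp [indicator_apply, mem_Ico, h1, h2, not_le.mpr h2]
  · rcases lt_or_ge s x with h1 | h1
    · simp [indicator_apply, mem_Ico, h1, h2, not_lt.mpr h2]
    · simp [indicator_apply, mem_Ico, not_lt.mpr h1, not_lt.mpr h2, h2]

lemma hk_eq_indicator_neg {x : ℝ} (hx : x < 0) :
    hk x = fun s => -((Ico x (0:ℝ)).indicator (fun _ => (1:ℝ)) s) := by
  funext s
  unfold hk
  rcases lt_or_ge s x with h1 | h1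
  · have h2 : s < 0 := lt_trans h1 hx
    simp [indicator_apply, mem_Ico, h1, h2, not_le.mpr h1]
  · rcases lt_or_ge s 0 with h2 | h2
    · simp [indicator_apply, mem_Ico, not_lt.mpr h1, h2, h1]
    · simp [indicator_apply, mem_Ico, not_lt.mpr h1, not_lt.mpr h2, h2]

lemma hk_integrable (x : ℝ) : Integrable (hk x) volume := by
  rcases le_or_gt 0 x with hx | hx
  · rw [hk_eq_indicator_nonneg hx]
    exact (integrable_indicator_iff measurableSet_Ico).mpr
      (integrableOn_const (C := (1:ℝ)) (by simp [Real.volume_Ico]))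
  · rw [hk_eq_indicator_neg hx]
    exact ((integrable_indicator_iff measurableSet_Ico).mpr
      (integrableOn_const (C := (1:ℝ)) (by simp [Real.volume_Ico]))).neg

lemma hk_integral (x : ℝ) : ∫ s, hk x s = x := by
  rcases le_or_gt 0 x with hx | hx
  · rw [hk_eq_indicator_nonneg hx, integral_indicator_const _ measurableSet_Ico]
    simp only [Real.volume_Ico, sub_zero, smul_eq_mul, mul_one]
    rw [measureReal_def, Real.volume_Ico, sub_zero]
    exact ENNReal.toReal_ofReal hx
  · rw [hk_eq_indicator_neg hx]
    rw [integral_neg, integral_indicator_const _ measurableSet_Ico]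
    simp only [Real.volume_Ico, zero_sub, smul_eq_mul, mul_one]
    rw [measureReal_def, Real.volume_Ico, zero_sub, ENNReal.toReal_ofReal (by linarith : (0:ℝ) ≤ -x)]
    ring

lemma hk_abs_integral (x : ℝ) : ∫ s, |hk x s| = |x| := by
  rcases le_or_gt 0 x with hx | hx
  · have : ∀ s, |hk x s| = hk x s := by
      intro s
      rw [hk_eq_indicator_nonneg hx]
      simp [indicator_apply]
      split <;> norm_num
    simp_rw [this, hk_integral, abs_of_nonneg hx]
  · have : ∀ s, |hk x s| = -hk x s := by
      intro s
      rw [hk_eq_indicator_neg hx]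
      simp [indicator_apply]
      split <;> norm_num
    simp_rw [this, integral_neg, hk_integral, abs_of_neg hx]

end Hoeffding

section Hoeffding2

/-- Quadrant function of a plan. -/
noncomputable def quadF (κ : Measure (ℝ × ℝ)) (s t : ℝ) : ℝ :=
  (κ (Ioi s ×ˢ Ioi t)).toReal - (if t < 0 then 1 else 0) * (κ (Ioi s ×ˢ univ)).toReal
    - (if s < 0 then 1 else 0) * (κ (univ ×ˢ Ioi t)).toReal
    + (if s < 0 then 1 else 0) * (if t < 0 then 1 else 0)

variable (κ : Measure (ℝ × ℝ)) [IsProbabilityMeasure κ]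

lemma quadF_eq_integral (s t : ℝ) :
    ∫ q : ℝ × ℝ, hk q.1 s * hk q.2 t ∂κ = quadF κ s t := by
  have hpt : ∀ q : ℝ × ℝ, hk q.1 s * hk q.2 t =
      (Ioi s ×ˢ Ioi t).indicator (fun _ => (1:ℝ)) q
        - (if t < 0 then (1:ℝ) else 0) * (Ioi s ×ˢ (univ : Set ℝ)).indicator (fun _ => (1:ℝ)) q
        - (if s < 0 then (1:ℝ) else 0) * ((univ : Set ℝ) ×ˢ Ioi t).indicator (fun _ => (1:ℝ)) q
        + (if s < 0 then (1:ℝ) else 0) * (if t < 0 then (1:ℝ) else 0) := by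
    intro q
    unfold hk
    simp only [indicator_apply, mem_prod, mem_Ioi, mem_univ, true_and, and_true]
    by_cases h1 : s < q.1 <;> by_cases h2 : t < q.2 <;> by_cases h3 : s < 0 <;>
      by_cases h4 : t < 0 <;> simp [h1, h2, h3, h4] <;> ring
  simp_rw [hpt]
  set c1 : ℝ := if s < 0 then 1 else 0 with hc1
  set c2 : ℝ := if t < 0 then 1 else 0 with hc2
  set f1 : ℝ × ℝ → ℝ := (Ioi s ×ˢ Ioi t).indicator (fun _ => (1:ℝ)) with hf1
  set f2 : ℝ × ℝ → ℝ := (Ioi s ×ˢ (univ : Set ℝ)).indicator (fun _ => (1:ℝ)) with hf2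
  set f3 : ℝ × ℝ → ℝ := ((univ : Set ℝ) ×ˢ Ioi t).indicator (fun _ => (1:ℝ)) with hf3
  have hi1 : Integrable f1 κ :=
    (integrable_const (1:ℝ)).indicator (measurableSet_Ioi.prod measurableSet_Ioi)
  have hi2 : Integrable f2 κ :=
    (integrable_const (1:ℝ)).indicator (measurableSet_Ioi.prod MeasurableSet.univ)
  have hi3 : Integrable f3 κ :=
    (integrable_const (1:ℝ)).indicator (MeasurableSet.univ.prod measurableSet_Ioi)
  have e1 : ∫ q, (f1 q - c2 * f2 q - c1 * f3 q + c1 * c2) ∂κ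
      = (∫ q, (f1 q - c2 * f2 q - c1 * f3 q) ∂κ) + c1 * c2 := by
    have := integral_add (μ := κ)
      ((hi1.sub (hi2.const_mul c2)).sub (hi3.const_mul c1)) (integrable_const (c1 * c2))
    simpa using this
  have e2 : ∫ q, (f1 q - c2 * f2 q - c1 * f3 q) ∂κ
      = (∫ q, (f1 q - c2 * f2 q) ∂κ) - c1 * ∫ q, f3 q ∂κ := by
    have := integral_sub (μ := κ) (hi1.sub (hi2.const_mul c2)) (hi3.const_mul c1)
    rw [integral_const_mul] at this
    simpa using this
  have e3 : ∫ q, (f1 q - c2 * f2 q) ∂κ = (∫ q, f1 q ∂κ) - c2 * ∫ q, f2 q ∂κ := by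
    have := integral_sub (μ := κ) hi1 (hi2.const_mul c2)
    rw [integral_const_mul] at this
    simpa using this
  have v1 : ∫ q, f1 q ∂κ = (κ (Ioi s ×ˢ Ioi t)).toReal := by
    rw [hf1, integral_indicator_const _ (measurableSet_Ioi.prod measurableSet_Ioi)]
    simp [measureReal_def]
  have v2 : ∫ q, f2 q ∂κ = (κ (Ioi s ×ˢ (univ : Set ℝ))).toReal := by
    rw [hf2, integral_indicator_const _ (measurableSet_Ioi.prod MeasurableSet.univ)]
    simp [measureReal_def]
  have v3 : ∫ q, f3 q ∂κ = (κ ((univ : Set ℝ) ×ˢ Ioi t)).toReal := by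
    rw [hf3, integral_indicator_const _ (MeasurableSet.univ.prod measurableSet_Ioi)]
    simp [measureReal_def]
  rw [e1, e2, e3, v1, v2, v3]
  unfold quadF
  rw [← hc1, ← hc2]

lemma hoeffding_key
    (h2 : Integrable (fun q : ℝ × ℝ => |q.1| * |q.2|) κ) :
    (∫ q : ℝ × ℝ, q.1 * q.2 ∂κ =
      ∫ st : ℝ × ℝ, quadF κ st.1 st.2 ∂(volume.prod volume))
    ∧ Integrable (fun st : ℝ × ℝ => quadF κ st.1 st.2) (volume.prod volume) := by
  set Φ : (ℝ × ℝ) → (ℝ × ℝ) → ℝ := fun q st => hk q.1 st.1 * hk q.2 st.2 with hΦ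
  have hmeas : Measurable (Function.uncurry Φ) := by
    apply Measurable.mul
    · exact hk_measurable.comp ((measurable_fst.comp measurable_fst).prodMk
        (measurable_fst.comp measurable_snd))
    · exact hk_measurable.comp ((measurable_snd.comp measurable_fst).prodMk
        (measurable_snd.comp measurable_snd))
  have habs : ∀ q : ℝ × ℝ, (∫ st : ℝ × ℝ, ‖Φ q st‖ ∂(volume.prod volume))
      = |q.1| * |q.2| := by
    intro q
    have : ∀ st : ℝ × ℝ, ‖Φ q st‖ = |hk q.1 st.1| * |hk q.2 st.2| := by
      intro st
      rw [hΦ]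
      simp [abs_mul]
    simp_rw [this]
    rw [integral_prod_mul (μ := volume) (ν := volume) (fun s => |hk q.1 s|)
      (fun t => |hk q.2 t|), hk_abs_integral, hk_abs_integral]
  have hint : Integrable (Function.uncurry Φ) (κ.prod (volume.prod volume)) := by
    rw [integrable_prod_iff hmeas.aestronglyMeasurable]
    constructor
    · exact Eventually.of_forall fun q =>
        ((hk_integrable q.1).mul_prod (hk_integrable q.2))
    · exact h2.congr (Eventually.of_forall fun q => (habs q).symm)
  have hinner : ∀ q : ℝ × ℝ, (∫ st : ℝ × ℝ, Φ q st ∂(volume.prod volume)) = q.1 * q.2 := by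
    intro q
    rw [hΦ]
    rw [integral_prod_mul (μ := volume) (ν := volume) (hk q.1) (hk q.2),
      hk_integral, hk_integral]
  constructor
  · have swap := integral_integral_swap (μ := κ) (ν := volume.prod volume) (f := Φ) hint
    calc ∫ q : ℝ × ℝ, q.1 * q.2 ∂κ
        = ∫ q : ℝ × ℝ, (∫ st : ℝ × ℝ, Φ q st ∂(volume.prod volume)) ∂κ := by
          simp_rw [hinner]
      _ = ∫ st : ℝ × ℝ, (∫ q : ℝ × ℝ, Φ q st ∂κ) ∂(volume.prod volume) := swap
      _ = ∫ st : ℝ × ℝ, quadF κ st.1 st.2 ∂(volume.prod volume) := by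
          congr 1
          funext st
          exact quadF_eq_integral κ st.1 st.2
  · have := hint.integral_prod_right
    refine this.congr ?_
    exact Eventually.of_forall fun st => quadF_eq_integral κ st.1 st.2

end Hoeffding2

section CostLemmas

variable (κ : Measure (ℝ × ℝ)) [IsProbabilityMeasure κ]

lemma absmul_integrable
    (hx2 : Integrable (fun q : ℝ × ℝ => q.1 ^ 2) κ)
    (hy2 : Integrable (fun q : ℝ × ℝ => q.2 ^ 2) κ) :
    Integrable (fun q : ℝ × ℝ => |q.1| * |q.2|) κ := by
  refine Integrable.mono' ((hx2.add hy2).div_const 2)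
    ((measurable_fst.abs.mul measurable_snd.abs).aestronglyMeasurable) ?_
  refine Eventually.of_forall fun q => ?_
  rw [Real.norm_eq_abs, abs_of_nonneg (mul_nonneg (abs_nonneg _) (abs_nonneg _))]
  show |q.1| * |q.2| ≤ (q.1 ^ 2 + q.2 ^ 2) / 2
  nlinarith [sq_nonneg (|q.1| - |q.2|), sq_abs q.1, sq_abs q.2, abs_nonneg q.1, abs_nonneg q.2]

lemma mul_integrable
    (hx2 : Integrable (fun q : ℝ × ℝ => q.1 ^ 2) κ)
    (hy2 : Integrable (fun q : ℝ × ℝ => q.2 ^ 2) κ) :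
    Integrable (fun q : ℝ × ℝ => q.1 * q.2) κ := by
  refine (absmul_integrable κ hx2 hy2).mono'
    ((measurable_fst.mul measurable_snd).aestronglyMeasurable) ?_
  refine Eventually.of_forall fun q => ?_
  rw [Real.norm_eq_abs, abs_mul]

lemma cost_expand
    (hx2 : Integrable (fun q : ℝ × ℝ => q.1 ^ 2) κ)
    (hy2 : Integrable (fun q : ℝ × ℝ => q.2 ^ 2) κ) :
    ∫ q : ℝ × ℝ, (q.1 - q.2) ^ 2 ∂κ =
      (∫ q : ℝ × ℝ, q.1 ^ 2 ∂κ) + (∫ q : ℝ × ℝ, q.2 ^ 2 ∂κ)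
        - 2 * ∫ q : ℝ × ℝ, q.1 * q.2 ∂κ := by
  have hmul := mul_integrable κ hx2 hy2
  have hpt : ∀ q : ℝ × ℝ, (q.1 - q.2) ^ 2 = (q.1 ^ 2 + q.2 ^ 2) - 2 * (q.1 * q.2) := by
    intro q; ring
  simp_rw [hpt]
  have e1 := integral_sub (μ := κ) (hx2.add hy2) (hmul.const_mul 2)
  rw [integral_const_mul] at e1
  have e2 := integral_add (μ := κ) hx2 hy2
  calc ∫ q : ℝ × ℝ, (q.1 ^ 2 + q.2 ^ 2) - 2 * (q.1 * q.2) ∂κ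
      = (∫ q : ℝ × ℝ, q.1 ^ 2 + q.2 ^ 2 ∂κ) - 2 * ∫ q : ℝ × ℝ, q.1 * q.2 ∂κ := e1
    _ = _ := by rw [e2]

lemma integral_mul_le_of_quad_le (π γ : Measure (ℝ × ℝ))
    [IsProbabilityMeasure π] [IsProbabilityMeasure γ]
    (hq : ∀ s t : ℝ, π (Ioi s ×ˢ Ioi t) ≤ γ (Ioi s ×ˢ Ioi t))
    (hfst : π.map Prod.fst = γ.map Prod.fst)
    (hsnd : π.map Prod.snd = γ.map Prod.snd)
    (hπ2 : Integrable (fun q : ℝ × ℝ => |q.1| * |q.2|) π)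
    (hγ2 : Integrable (fun q : ℝ × ℝ => |q.1| * |q.2|) γ) :
    ∫ q : ℝ × ℝ, q.1 * q.2 ∂π ≤ ∫ q : ℝ × ℝ, q.1 * q.2 ∂γ := by
  obtain ⟨heπ, hiπ⟩ := hoeffding_key π hπ2
  obtain ⟨heγ, hiγ⟩ := hoeffding_key γ hγ2
  rw [heπ, heγ]
  refine integral_mono hiπ hiγ ?_
  intro st
  obtain ⟨s, t⟩ := st
  show quadF π s t ≤ quadF γ s t
  have hm1 : π (Ioi s ×ˢ (univ : Set ℝ)) = γ (Ioi s ×ˢ (univ : Set ℝ)) := by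
    rw [prod_univ, ← Measure.map_apply measurable_fst measurableSet_Ioi,
      ← Measure.map_apply measurable_fst measurableSet_Ioi, hfst]
  have hm2 : π ((univ : Set ℝ) ×ˢ Ioi t) = γ ((univ : Set ℝ) ×ˢ Ioi t) := by
    rw [univ_prod, ← Measure.map_apply measurable_snd measurableSet_Ioi,
      ← Measure.map_apply measurable_snd measurableSet_Ioi, hsnd]
  unfold quadF
  rw [hm1, hm2]
  have : (π (Ioi s ×ˢ Ioi t)).toReal ≤ (γ (Ioi s ×ˢ Ioi t)).toReal :=
    (ENNReal.toReal_le_toReal (measure_ne_top π _) (measure_ne_top γ _)).mpr (hq s t)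
  linarith

end CostLemmas

section Condexp

variable {α : Type*} {m m0 : MeasurableSpace α} {μ : Measure α}

/-- The conditional expectation of an L² function is L². -/
lemma memℒp_two_condexp (hm : m ≤ m0) (μ : Measure α) [IsFiniteMeasure μ]
    {f : α → ℝ} (hf : MemLp f 2 μ) : MemLp (μ[f|m]) 2 μ := by
  have hfi : Integrable f μ := hf.integrable one_le_two
  set fL : Lp ℝ 2 μ := hf.toLp f with hfL
  have hce : (condExpL2 ℝ ℝ hm fL : α → ℝ) =ᵐ[μ] μ[f|m] := by
    refine ae_eq_condExp_of_forall_setIntegral_eq hm hfi ?_ ?_ ?_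
    · intro s _ _
      exact ((Lp.memLp (condExpL2 ℝ ℝ hm fL : Lp ℝ 2 μ)).integrable one_le_two).integrableOn
    · intro s hs hμs
      rw [integral_condExpL2_eq hm fL hs hμs.ne]
      exact setIntegral_congr_ae (hm s hs) ((hf.coeFn_toLp).mono fun x hx _ => hx)
    · exact lpMeas.aestronglyMeasurable (condExpL2 ℝ ℝ hm fL)
  exact (Lp.memLp (condExpL2 ℝ ℝ hm fL : Lp ℝ 2 μ)).ae_eq hce

lemma integral_mul_condexp_eq (hm : m ≤ m0) (μ : Measure α) [IsProbabilityMeasure μ]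
    {h f : α → ℝ} (hh : StronglyMeasurable[m] h)
    (hhf : Integrable (h * f) μ) (hf : Integrable f μ) :
    ∫ a, h a * f a ∂μ = ∫ a, h a * (μ[f|m]) a ∂μ := by
  haveI : SigmaFinite (μ.trim hm) := by
    have : IsFiniteMeasure (μ.trim hm) := isFiniteMeasure_trim hm
    infer_instance
  have hpull := condExp_mul_of_stronglyMeasurable_left hh hhf hf
  calc ∫ a, h a * f a ∂μ = ∫ a, (h * f) a ∂μ := rfl
    _ = ∫ a, (μ[h * f|m]) a ∂μ := (integral_condExp hm).symm
    _ = ∫ a, (h * μ[f|m]) a ∂μ := integral_congr_ae hpull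
    _ = ∫ a, h a * (μ[f|m]) a ∂μ := rfl

end Condexp

section Couplings

lemma coupling_prob (π : Measure (ℝ × ℝ)) (ρ : Measure ℝ) [IsProbabilityMeasure ρ]
    (h : π.map Prod.fst = ρ) : IsProbabilityMeasure π := by
  constructor
  have h1 : (π.map Prod.fst) univ = π univ := by
    rw [Measure.map_apply measurable_fst MeasurableSet.univ, preimage_univ]
  rw [← h1, h, measure_univ]

lemma coupling_integrable_fst {π : Measure (ℝ × ℝ)} {ρ : Measure ℝ}
    (h : π.map Prod.fst = ρ) (hρ : Integrable (fun x => x ^ 2) ρ) :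
    Integrable (fun q : ℝ × ℝ => q.1 ^ 2) π := by
  rw [← h] at hρ
  exact (integrable_map_measure ((continuous_pow 2).measurable.aestronglyMeasurable)
    measurable_fst.aemeasurable).mp hρ

lemma coupling_integrable_snd {π : Measure (ℝ × ℝ)} {ν : Measure ℝ}
    (h : π.map Prod.snd = ν) (hν : Integrable (fun x => x ^ 2) ν) :
    Integrable (fun q : ℝ × ℝ => q.2 ^ 2) π := by
  rw [← h] at hν
  exact (integrable_map_measure ((continuous_pow 2).measurable.aestronglyMeasurable)
    measurable_snd.aemeasurable).mp hν

lemma coupling_integral_fst_sq {π : Measure (ℝ × ℝ)} {ρ : Measure ℝ}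
    (h : π.map Prod.fst = ρ) :
    ∫ q : ℝ × ℝ, q.1 ^ 2 ∂π = ∫ x, x ^ 2 ∂ρ := by
  rw [← h, integral_map measurable_fst.aemeasurable
    ((continuous_pow 2).measurable.aestronglyMeasurable)]

lemma coupling_integral_snd_sq {π : Measure (ℝ × ℝ)} {ν : Measure ℝ}
    (h : π.map Prod.snd = ν) :
    ∫ q : ℝ × ℝ, q.2 ^ 2 ∂π = ∫ x, x ^ 2 ∂ν := by
  rw [← h, integral_map measurable_snd.aemeasurable
    ((continuous_pow 2).measurable.aestronglyMeasurable)]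

lemma coupling_cost_integrable {π : Measure (ℝ × ℝ)} [IsProbabilityMeasure π]
    (hx2 : Integrable (fun q : ℝ × ℝ => q.1 ^ 2) π)
    (hy2 : Integrable (fun q : ℝ × ℝ => q.2 ^ 2) π) :
    Integrable (fun q : ℝ × ℝ => (q.1 - q.2) ^ 2) π := by
  have hmul := mul_integrable π hx2 hy2
  have : (fun q : ℝ × ℝ => (q.1 - q.2) ^ 2)
      = fun q : ℝ × ℝ => (q.1 ^ 2 + q.2 ^ 2) - 2 * (q.1 * q.2) := by
    funext q; ring
  rw [this]
  exact (hx2.add hy2).sub (hmul.const_mul 2)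

end Couplings


section W2

lemma lintegral_cost_eq_ofReal (π : Measure (ℝ × ℝ)) [IsProbabilityMeasure π]
    (hx2 : Integrable (fun q : ℝ × ℝ => q.1 ^ 2) π)
    (hy2 : Integrable (fun q : ℝ × ℝ => q.2 ^ 2) π) :
    ∫⁻ q, ENNReal.ofReal ((q.1 - q.2) ^ 2) ∂π
      = ENNReal.ofReal (∫ q : ℝ × ℝ, (q.1 - q.2) ^ 2 ∂π) :=
  (ofReal_integral_eq_lintegral_ofReal (coupling_cost_integrable hx2 hy2)
    (Eventually.of_forall fun q => sq_nonneg _)).symm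

lemma W2sq_eq_of_max (ρ ν : Measure ℝ) [IsProbabilityMeasure ρ] [IsProbabilityMeasure ν]
    (hρ2 : Integrable (fun x => x ^ 2) ρ) (hν2 : Integrable (fun x => x ^ 2) ν)
    (γ : Measure (ℝ × ℝ))
    (hγf : γ.map Prod.fst = ρ) (hγs : γ.map Prod.snd = ν)
    (hmax : ∀ π : Measure (ℝ × ℝ), π.map Prod.fst = ρ → π.map Prod.snd = ν →
      ∀ s t : ℝ, π (Ioi s ×ˢ Ioi t) ≤ γ (Ioi s ×ˢ Ioi t)) :
    W2sq ρ ν = ENNReal.ofReal (∫ q : ℝ × ℝ, (q.1 - q.2) ^ 2 ∂γ) := by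
  haveI := coupling_prob γ ρ hγf
  have hγx2 := coupling_integrable_fst hγf hρ2
  have hγy2 := coupling_integrable_snd hγs hν2
  apply le_antisymm
  · have hle : W2sq ρ ν ≤ ∫⁻ q, ENNReal.ofReal ((q.1 - q.2) ^ 2) ∂γ :=
      iInf₂_le γ ⟨hγf, hγs⟩
    rwa [lintegral_cost_eq_ofReal γ hγx2 hγy2] at hle
  · refine le_iInf₂ fun π hπ => ?_
    obtain ⟨hf, hs⟩ := hπ
    haveI := coupling_prob π ρ hf
    have hπx2 := coupling_integrable_fst hf hρ2
    have hπy2 := coupling_integrable_snd hs hν2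
    rw [lintegral_cost_eq_ofReal π hπx2 hπy2]
    apply ENNReal.ofReal_le_ofReal
    rw [cost_expand γ hγx2 hγy2, cost_expand π hπx2 hπy2,
      coupling_integral_fst_sq hγf, coupling_integral_snd_sq hγs,
      coupling_integral_fst_sq hf, coupling_integral_snd_sq hs]
    have := integral_mul_le_of_quad_le π γ (hmax π hf hs)
      (hf.trans hγf.symm) (hs.trans hγs.symm)
      (absmul_integrable π hπx2 hπy2) (absmul_integrable γ hγx2 hγy2)
    linarith

end W2

section GenericHelpers

variable {α : Type*} {mα : MeasurableSpace α}

lemma integrable_mul_of_sq (μ : Measure α) [IsFiniteMeasure μ] {f h : α → ℝ}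
    (hf : AEStronglyMeasurable f μ) (hh : AEStronglyMeasurable h μ)
    (hf2 : Integrable (fun a => f a ^ 2) μ) (hh2 : Integrable (fun a => h a ^ 2) μ) :
    Integrable (fun a => f a * h a) μ := by
  refine Integrable.mono' ((hf2.add hh2).div_const 2) (hf.mul hh) ?_
  refine Eventually.of_forall fun a => ?_
  rw [Real.norm_eq_abs]
  show |f a * h a| ≤ ((fun a => f a ^ 2) + fun a => h a ^ 2) a / 2
  simp only [Pi.add_apply]
  rw [abs_mul]
  nlinarith [sq_nonneg (|f a| - |h a|), sq_abs (f a), sq_abs (h a),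
    abs_nonneg (f a), abs_nonneg (h a)]

lemma integral_sub_sq_eq (μ : Measure α) [IsFiniteMeasure μ] {f h : α → ℝ}
    (hf : AEStronglyMeasurable f μ) (hh : AEStronglyMeasurable h μ)
    (hf2 : Integrable (fun a => f a ^ 2) μ) (hh2 : Integrable (fun a => h a ^ 2) μ) :
    ∫ a, (f a - h a) ^ 2 ∂μ =
      (∫ a, f a ^ 2 ∂μ) + (∫ a, h a ^ 2 ∂μ) - 2 * ∫ a, f a * h a ∂μ := by
  have hmul := integrable_mul_of_sq μ hf hh hf2 hh2
  have hpt : ∀ a, (f a - h a) ^ 2 = (f a ^ 2 + h a ^ 2) - 2 * (f a * h a) := by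
    intro a; ring
  simp_rw [hpt]
  have e1 := integral_sub (μ := μ) (hf2.add hh2) (hmul.const_mul 2)
  rw [integral_const_mul] at e1
  have e2 := integral_add (μ := μ) hf2 hh2
  calc ∫ a, (f a ^ 2 + h a ^ 2) - 2 * (f a * h a) ∂μ
      = (∫ a, f a ^ 2 + h a ^ 2 ∂μ) - 2 * ∫ a, f a * h a ∂μ := e1
    _ = _ := by rw [e2]

end GenericHelpers


section Master

variable (μ ν : Measure ℝ) [IsProbabilityMeasure μ] [IsProbabilityMeasure ν]

lemma OTplan1D_eq :
    OTplan1D μ ν = Measure.map (fun p => (quantileFn μ p, quantileFn ν p))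
      (volume.restrict (Ioo (0:ℝ) 1)) := by
  rw [OTplan1D, Measure.restrict_congr_set Ioo_ae_eq_Icc]

lemma master (hμ2 : Integrable (fun x => x ^ 2) μ) (hν2 : Integrable (fun x => x ^ 2) ν)
    (bar : ℝ → ℝ) (hbarmeas : Measurable bar)
    (hbar : (fun q : ℝ × ℝ => bar q.1) =ᵐ[OTplan1D μ ν]
      (OTplan1D μ ν)[(fun q : ℝ × ℝ => q.2) |
        MeasurableSpace.comap Prod.fst inferInstance])
    (g : ℝ → ℝ) (hgmono : Monotone g)
    (hgL2 : Integrable (fun x => x ^ 2) (Measure.map g μ)) :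
    W2sq (Measure.map g μ) ν =
      ENNReal.ofReal ((∫ x, (g x - bar x) ^ 2 ∂μ) + (∫ y, y ^ 2 ∂ν) - ∫ x, (bar x) ^ 2 ∂μ)
    ∧ 0 ≤ (∫ x, (g x - bar x) ^ 2 ∂μ) + (∫ y, y ^ 2 ∂ν) - ∫ x, (bar x) ^ 2 ∂μ := by
  set Leb := volume.restrict (Ioo (0:ℝ) 1) with hLeb
  haveI : IsProbabilityMeasure Leb := ⟨by rw [hLeb]; simp [Real.volume_Ioo]⟩
  set Q1 := quantileFn μ with hQ1
  set Q2 := quantileFn ν with hQ2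
  have hQ1m : MonotoneOn Q1 (Ioo 0 1) := quantile_monotoneOn μ
  have hQ2m : MonotoneOn Q2 (Ioo 0 1) := quantile_monotoneOn ν
  have hQ1ae : AEMeasurable Q1 Leb := quantile_aemeasurable μ
  have hQ2ae : AEMeasurable Q2 Leb := quantile_aemeasurable ν
  have hpair : AEMeasurable (fun p => (Q1 p, Q2 p)) Leb := hQ1ae.prodMk hQ2ae
  have hplan : OTplan1D μ ν = Leb.map (fun p => (Q1 p, Q2 p)) := OTplan1D_eq μ ν
  set γ := OTplan1D μ ν with hγdef
  haveI : IsProbabilityMeasure γ := by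
    rw [hplan]; exact Measure.isProbabilityMeasure_map hpair
  have hγfst : γ.map Prod.fst = μ := by
    rw [hplan, AEMeasurable.map_map_of_aemeasurable measurable_fst.aemeasurable hpair]
    exact map_quantile μ
  have hγsnd : γ.map Prod.snd = ν := by
    rw [hplan, AEMeasurable.map_map_of_aemeasurable measurable_snd.aemeasurable hpair]
    exact map_quantile ν
  set T : ℝ × ℝ → ℝ × ℝ := fun q => (g q.1, q.2) with hT
  have hgm : Measurable g := hgmono.measurable
  have hTm : Measurable T := (hgm.comp measurable_fst).prodMk measurable_snd
  set γ' := γ.map T with hγ'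
  haveI : IsProbabilityMeasure γ' := Measure.isProbabilityMeasure_map hTm.aemeasurable
  haveI : IsProbabilityMeasure (Measure.map g μ) := Measure.isProbabilityMeasure_map hgm.aemeasurable
  have hγ'fst : γ'.map Prod.fst = Measure.map g μ := by
    rw [hγ', Measure.map_map measurable_fst hTm]
    have h1 : (Prod.fst ∘ T) = g ∘ Prod.fst := rfl
    rw [h1, ← Measure.map_map hgm measurable_fst, hγfst]
  have hγ'snd : γ'.map Prod.snd = ν := by
    rw [hγ', Measure.map_map measurable_snd hTm]
    have h1 : (Prod.snd ∘ T) = (Prod.snd : ℝ × ℝ → ℝ) := rfl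
    rw [h1, hγsnd]
  have hγ'rep : γ' = Leb.map (fun p => (g (Q1 p), Q2 p)) := by
    rw [hγ', hplan, AEMeasurable.map_map_of_aemeasurable hTm.aemeasurable hpair]
    rfl
  have hmax : ∀ π : Measure (ℝ × ℝ), π.map Prod.fst = Measure.map g μ →
      π.map Prod.snd = ν → ∀ s t : ℝ, π (Ioi s ×ˢ Ioi t) ≤ γ' (Ioi s ×ˢ Ioi t) := by
    intro π hf hs s t
    have hmono1 : MonotoneOn (fun p => g (Q1 p)) (Ioo (0:ℝ) 1) :=
      fun p hp q hq hpq => hgmono (hQ1m hp hq hpq)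
    have hLebmap1 : Leb.map (fun p => g (Q1 p)) = Measure.map g μ := by
      have h1 : (fun p => g (Q1 p)) = g ∘ Q1 := rfl
      rw [h1, ← AEMeasurable.map_map_of_aemeasurable hgm.aemeasurable hQ1ae]
      congr 1
      exact map_quantile μ
    have hLebmap2 : Leb.map Q2 = ν := map_quantile ν
    have hq := quadrant_le_monotone_coupling hmono1 hQ2m π
      (by rw [hLebmap1]; exact hf) (by rw [hLebmap2]; exact hs) s t
    rwa [← hγ'rep] at hq
  have hW2 := W2sq_eq_of_max (Measure.map g μ) ν hgL2 hν2 γ' hγ'fst hγ'snd hmax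
  have hcost1 : ∫ q : ℝ × ℝ, (q.1 - q.2) ^ 2 ∂γ' = ∫ q : ℝ × ℝ, (g q.1 - q.2) ^ 2 ∂γ := by
    rw [hγ', integral_map hTm.aemeasurable (f := fun q : ℝ × ℝ => (q.1 - q.2) ^ 2)
      (((measurable_fst.sub measurable_snd).pow_const 2).aestronglyMeasurable)]
  -- conditional expectation machinery
  have hmle : (MeasurableSpace.comap (Prod.fst : ℝ × ℝ → ℝ) inferInstance)
      ≤ (Prod.instMeasurableSpace : MeasurableSpace (ℝ × ℝ)) := measurable_fst.comap_le
  have hfstm : Measurable[MeasurableSpace.comap (Prod.fst : ℝ × ℝ → ℝ) inferInstance]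
      (Prod.fst : ℝ × ℝ → ℝ) := measurable_iff_comap_le.mpr le_rfl
  have hY2 : Integrable (fun q : ℝ × ℝ => q.2 ^ 2) γ := coupling_integrable_snd hγsnd hν2
  have hG2 : Integrable (fun q : ℝ × ℝ => (g q.1) ^ 2) γ := by
    have h1 := coupling_integrable_fst hγ'fst hgL2
    rw [hγ'] at h1
    exact (integrable_map_measure ((measurable_fst.pow_const 2)).aestronglyMeasurable
      hTm.aemeasurable).mp h1
  have hYml : MemLp (fun q : ℝ × ℝ => q.2) 2 γ :=
    (memLp_two_iff_integrable_sq measurable_snd.aestronglyMeasurable).mpr hY2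
  have hbml : MemLp (fun q : ℝ × ℝ => bar q.1) 2 γ :=
    (memℒp_two_condexp hmle γ hYml).ae_eq hbar.symm
  have hbaesm : AEStronglyMeasurable (fun q : ℝ × ℝ => bar q.1) γ :=
    (hbarmeas.comp measurable_fst).aestronglyMeasurable
  have hb2 : Integrable (fun q : ℝ × ℝ => (bar q.1) ^ 2) γ :=
    (memLp_two_iff_integrable_sq hbaesm).mp hbml
  have hYint : Integrable (fun q : ℝ × ℝ => q.2) γ := hYml.integrable one_le_two
  have hGaesm : AEStronglyMeasurable (fun q : ℝ × ℝ => g q.1) γ :=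
    (hgm.comp measurable_fst).aestronglyMeasurable
  have hYaesm : AEStronglyMeasurable (fun q : ℝ × ℝ => q.2) γ :=
    measurable_snd.aestronglyMeasurable
  have key : ∀ h : ℝ → ℝ, Measurable h → Integrable (fun q : ℝ × ℝ => (h q.1) ^ 2) γ →
      ∫ q : ℝ × ℝ, h q.1 * q.2 ∂γ = ∫ q : ℝ × ℝ, h q.1 * bar q.1 ∂γ := by
    intro h hhm hh2
    have hsm : StronglyMeasurable[MeasurableSpace.comap (Prod.fst : ℝ × ℝ → ℝ) inferInstance]
        (fun q : ℝ × ℝ => h q.1) :=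
      (hhm.comp hfstm).stronglyMeasurable
    have hint : Integrable ((fun q : ℝ × ℝ => h q.1) * (fun q : ℝ × ℝ => q.2)) γ :=
      integrable_mul_of_sq γ (hhm.comp measurable_fst).aestronglyMeasurable hYaesm hh2 hY2
    have he := integral_mul_condexp_eq hmle γ hsm hint hYint
    rw [he]
    refine integral_congr_ae ?_
    filter_upwards [hbar] with q hq
    rw [← hq]
  have key1 : ∫ q : ℝ × ℝ, (g q.1 - bar q.1) * q.2 ∂γ
      = ∫ q : ℝ × ℝ, (g q.1 - bar q.1) * bar q.1 ∂γ := by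
    refine key (fun x => g x - bar x) (hgm.sub hbarmeas) ?_
    have h1 : (fun q : ℝ × ℝ => (g q.1 - bar q.1) ^ 2)
        = fun q : ℝ × ℝ => ((g q.1) ^ 2 + (bar q.1) ^ 2) - 2 * (g q.1 * bar q.1) :=
      funext fun q => by ring
    rw [h1]
    exact (hG2.add hb2).sub ((integrable_mul_of_sq γ hGaesm hbaesm hG2 hb2).const_mul 2)
  have key2 : ∫ q : ℝ × ℝ, bar q.1 * q.2 ∂γ = ∫ q : ℝ × ℝ, bar q.1 * bar q.1 ∂γ :=
    key bar hbarmeas hb2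
  -- scalar bookkeeping
  have hGYint : Integrable (fun q : ℝ × ℝ => g q.1 * q.2) γ :=
    integrable_mul_of_sq γ hGaesm hYaesm hG2 hY2
  have hBYint : Integrable (fun q : ℝ × ℝ => bar q.1 * q.2) γ :=
    integrable_mul_of_sq γ hbaesm hYaesm hb2 hY2
  have hGBint : Integrable (fun q : ℝ × ℝ => g q.1 * bar q.1) γ :=
    integrable_mul_of_sq γ hGaesm hbaesm hG2 hb2
  have hBBeq : ∫ q : ℝ × ℝ, bar q.1 * bar q.1 ∂γ = ∫ q : ℝ × ℝ, (bar q.1) ^ 2 ∂γ := by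
    congr 1; funext q; ring
  have key1' : (∫ q : ℝ × ℝ, g q.1 * q.2 ∂γ) - (∫ q : ℝ × ℝ, bar q.1 * q.2 ∂γ)
      = (∫ q : ℝ × ℝ, g q.1 * bar q.1 ∂γ) - ∫ q : ℝ × ℝ, (bar q.1) ^ 2 ∂γ := by
    have l1 : ∫ q : ℝ × ℝ, (g q.1 - bar q.1) * q.2 ∂γ
        = (∫ q : ℝ × ℝ, g q.1 * q.2 ∂γ) - ∫ q : ℝ × ℝ, bar q.1 * q.2 ∂γ := by
      rw [← integral_sub hGYint hBYint]
      congr 1; funext q; ring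
    have l2 : ∫ q : ℝ × ℝ, (g q.1 - bar q.1) * bar q.1 ∂γ
        = (∫ q : ℝ × ℝ, g q.1 * bar q.1 ∂γ) - ∫ q : ℝ × ℝ, (bar q.1) ^ 2 ∂γ := by
      have hBBint : Integrable (fun q : ℝ × ℝ => bar q.1 * bar q.1) γ :=
        hb2.congr (Eventually.of_forall fun q => by ring)
      rw [← hBBeq, ← integral_sub hGBint hBBint]
      congr 1; funext q; ring
    rw [← l1, ← l2, key1]
  have key2' : ∫ q : ℝ × ℝ, bar q.1 * q.2 ∂γ = ∫ q : ℝ × ℝ, (bar q.1) ^ 2 ∂γ := by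
    rw [key2, hBBeq]
  have hGYeq : ∫ q : ℝ × ℝ, g q.1 * q.2 ∂γ = ∫ q : ℝ × ℝ, g q.1 * bar q.1 ∂γ := by
    rw [key2'] at key1'; linarith
  -- expansions
  have eC : ∫ q : ℝ × ℝ, (g q.1 - q.2) ^ 2 ∂γ
      = (∫ q : ℝ × ℝ, (g q.1) ^ 2 ∂γ) + (∫ q : ℝ × ℝ, q.2 ^ 2 ∂γ)
        - 2 * ∫ q : ℝ × ℝ, g q.1 * q.2 ∂γ :=
    integral_sub_sq_eq γ hGaesm hYaesm hG2 hY2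
  have eA : ∫ q : ℝ × ℝ, (g q.1 - bar q.1) ^ 2 ∂γ
      = (∫ q : ℝ × ℝ, (g q.1) ^ 2 ∂γ) + (∫ q : ℝ × ℝ, (bar q.1) ^ 2 ∂γ)
        - 2 * ∫ q : ℝ × ℝ, g q.1 * bar q.1 ∂γ :=
    integral_sub_sq_eq γ hGaesm hbaesm hG2 hb2
  -- transfers to μ and ν
  have tA : ∫ q : ℝ × ℝ, (g q.1 - bar q.1) ^ 2 ∂γ = ∫ x, (g x - bar x) ^ 2 ∂μ := by
    rw [← hγfst, integral_map measurable_fst.aemeasurable (f := fun x => (g x - bar x) ^ 2)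
      (((hgm.sub hbarmeas).pow_const 2).aestronglyMeasurable)]
  have tB : ∫ q : ℝ × ℝ, (bar q.1) ^ 2 ∂γ = ∫ x, (bar x) ^ 2 ∂μ := by
    rw [← hγfst, integral_map measurable_fst.aemeasurable
      ((hbarmeas.pow_const 2).aestronglyMeasurable)]
  have tY : ∫ q : ℝ × ℝ, q.2 ^ 2 ∂γ = ∫ y, y ^ 2 ∂ν := coupling_integral_snd_sq hγsnd
  have hfinal : ∫ q : ℝ × ℝ, (g q.1 - q.2) ^ 2 ∂γ
      = (∫ x, (g x - bar x) ^ 2 ∂μ) + (∫ y, y ^ 2 ∂ν) - ∫ x, (bar x) ^ 2 ∂μ := by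
    rw [← tA, ← tB, ← tY, eC, eA, hGYeq]
    ring
  have hCnn : 0 ≤ ∫ q : ℝ × ℝ, (g q.1 - q.2) ^ 2 ∂γ :=
    integral_nonneg fun q => sq_nonneg _
  constructor
  · rw [hW2, hcost1, hfinal]
  · rw [← hfinal]; exact hCnn

end Master


/-- In dimension one, for a class G of non-decreasing maps pushing μ into P₂(ℝ),
W₂²(g#μ, ν) = ‖g − π̄*‖²_{L²(μ)} + m₂(ν) − m₂(π̄*#μ), where π̄* is the barycentric
projection of the quadratic-cost optimal plan π*; hence the minimisers over G of
W₂²(g#μ, ν) and of ‖g − π̄*‖²_{L²(μ)} coincide. -/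
theorem one_dim_equiv_projection (μ ν : MeasureTheory.Measure ℝ)
    [IsProbabilityMeasure μ] [IsProbabilityMeasure ν]
    (hμ2 : MeasureTheory.Integrable (fun x => x ^ 2) μ)
    (hν2 : MeasureTheory.Integrable (fun x => x ^ 2) ν)
    (G : Set (ℝ → ℝ))
    (hG : ∀ g ∈ G, Monotone g ∧
      MeasureTheory.Integrable (fun x => x ^ 2) (MeasureTheory.Measure.map g μ))
    (bar : ℝ → ℝ) (hbarmeas : Measurable bar)
    (hbar : (fun q : ℝ × ℝ => bar q.1) =ᵐ[OTplan1D μ ν]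
      (OTplan1D μ ν)[(fun q : ℝ × ℝ => q.2) |
        MeasurableSpace.comap Prod.fst inferInstance]) :
    (∀ g ∈ G,
      (W2sq (MeasureTheory.Measure.map g μ) ν).toReal =
        (∫ x, (g x - bar x) ^ 2 ∂μ) + (∫ y, y ^ 2 ∂ν) -
          ∫ y, y ^ 2 ∂(MeasureTheory.Measure.map bar μ)) ∧
    {g | g ∈ G ∧ ∀ g' ∈ G,
        W2sq (MeasureTheory.Measure.map g μ) ν ≤
          W2sq (MeasureTheory.Measure.map g' μ) ν} =
    {g | g ∈ G ∧ ∀ g' ∈ G,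
        (∫ x, (g x - bar x) ^ 2 ∂μ) ≤ ∫ x, (g' x - bar x) ^ 2 ∂μ} := by
  have hbarint : ∫ y, y ^ 2 ∂(Measure.map bar μ) = ∫ x, (bar x) ^ 2 ∂μ :=
    integral_map hbarmeas.aemeasurable ((continuous_pow 2).measurable.aestronglyMeasurable)
  have hmaster := fun (g : ℝ → ℝ) (hg : g ∈ G) =>
    master μ ν hμ2 hν2 bar hbarmeas hbar g (hG g hg).1 (hG g hg).2
  constructor
  · intro g hg
    obtain ⟨hW, hnn⟩ := hmaster g hg
    rw [hW, ENNReal.toReal_ofReal hnn, hbarint]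
  · have equiv : ∀ g ∈ G, ∀ g' ∈ G,
        (W2sq (Measure.map g μ) ν ≤ W2sq (Measure.map g' μ) ν ↔
          (∫ x, (g x - bar x) ^ 2 ∂μ) ≤ ∫ x, (g' x - bar x) ^ 2 ∂μ) := by
      intro g hg g' hg'
      obtain ⟨hW, hnn⟩ := hmaster g hg
      obtain ⟨hW', hnn'⟩ := hmaster g' hg'
      rw [hW, hW', ENNReal.ofReal_le_ofReal_iff hnn']
      constructor <;> intro h <;> linarith
    ext g
    simp only [mem_setOf_eq]
    constructor
    · rintro ⟨hgG, hmin⟩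
      exact ⟨hgG, fun g' hg' => (equiv g hgG g' hg').mp (hmin g' hg')⟩
    · rintro ⟨hgG, hmin⟩
      exact ⟨hgG, fun g' hg' => (equiv g hgG g' hg').mpr (hmin g' hg')⟩
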